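/- limsup_{h↓0} max_{0 ≤ t ≤ 1−h} |x̂(t+h) − x̂(t)| / ω(h) = 1, i.e., ω is the exact modulus of continuity of x̂. The lower bound is witnessed at t = 0 with h_n = (2/3)·2^{−n}, where x̂(h_n) − x̂(0) = ω(h_n) − (1 + √2)h_n. -/

import Mathlib

noncomputable def e00 (t : ℝ) : ℝ := max (min t (1 - t)) 0

noncomputable def e (m : ℕ) (k : ℤ) (t : ℝ) : ℝ :=
  (2 : ℝ) ^ (-(m : ℝ) / 2) * e00 ((2 : ℝ) ^ m * t - k)

noncomputable def xhat (t : ℝ) : ℝ :=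
  ∑' m : ℕ, ∑ k ∈ Finset.range (2 ^ m), e m k t

noncomputable def ν (h : ℝ) : ℤ := ⌊-Real.logb 2 h⌋

noncomputable def ω (h : ℝ) : ℝ :=
  (1 + 1 / Real.sqrt 2) * h * (2 : ℝ) ^ ((ν h : ℝ) / 2)
    + (1 / 3) * (2 * Real.sqrt 2 + 2) * (2 : ℝ) ^ (-(ν h : ℝ) / 2)

noncomputable section

def s2 : ℝ := Real.sqrt 2
def r2 : ℝ := (Real.sqrt 2)⁻¹
def gg (x : ℝ) : ℝ := |x - round x|
def FF (s : ℝ) : ℝ := ∑' m : ℕ, r2 ^ m * gg ((2:ℝ) ^ m * s)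

lemma gg_nonneg (x : ℝ) : 0 ≤ gg x := abs_nonneg _

lemma gg_le_half (x : ℝ) : gg x ≤ 1/2 := abs_sub_round x

lemma gg_min_int (x : ℝ) (n : ℤ) : gg x ≤ |x - n| := by
  rcases eq_or_ne n (round x) with h | h
  · simp [gg, h]
  · have h1 : (1 : ℝ) ≤ |(round x : ℝ) - n| := by
      have : round x - n ≠ 0 := sub_ne_zero.mpr (Ne.symm h)
      have := Int.one_le_abs this
      calc (1:ℝ) ≤ |(round x - n : ℤ)| := by exact_mod_cast this
        _ = |(round x : ℝ) - n| := by push_cast [Int.cast_abs]; ring_nf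
    have h2 : |x - round x| ≤ 1/2 := abs_sub_round x
    have h3 : |(round x : ℝ) - n| ≤ |x - round x| + |x - n| := by
      have := abs_sub (x - (round x : ℝ)) (x - n)
      calc |(round x : ℝ) - n| = |(x - n) - (x - round x)| := by ring_nf
        _ ≤ |x - n| + |x - round x| := abs_sub _ _
        _ = |x - round x| + |x - n| := by ring
    show |x - round x| ≤ |x - (n:ℝ)|
    nlinarith [abs_nonneg (x - (n:ℝ))]

lemma gg_add_int (x : ℝ) (n : ℤ) : gg (x + n) = gg x := by
  unfold gg
  rw [round_add_intCast]
  push_cast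
  ring_nf

lemma gg_neg (x : ℝ) : gg (-x) = gg x := by
  apply le_antisymm
  · calc gg (-x) ≤ |(-x) - ((-(round x)) : ℤ)| := gg_min_int _ _
      _ = |x - round x| := by push_cast; rw [← abs_neg]; ring_nf
  · calc gg x ≤ |x - ((-(round (-x))) : ℤ)| := gg_min_int _ _
      _ = |(-x) - round (-x)| := by push_cast; rw [← abs_neg]; ring_nf

lemma gg_subadd (x y : ℝ) : gg (x + y) ≤ gg x + gg y := by
  calc gg (x+y) ≤ |(x+y) - ((round x + round y : ℤ))| := gg_min_int _ _
    _ = |(x - round x) + (y - round y)| := by push_cast; ring_nf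
    _ ≤ |x - round x| + |y - round y| := abs_add_le _ _

lemma gg_eval_lo {x : ℝ} (h0 : 0 ≤ x) (h1 : x ≤ 1/2) : gg x = x := by
  have hf : Int.fract x = x := Int.fract_eq_self.mpr ⟨h0, by linarith⟩
  rw [gg, abs_sub_round_eq_min, hf, min_eq_left (by linarith)]

lemma gg_eval_hi {x : ℝ} (h0 : 1/2 ≤ x) (h1 : x ≤ 1) : gg x = 1 - x := by
  rcases eq_or_lt_of_le h1 with h | h
  · subst h; simp [gg]
  · have hf : Int.fract x = x := Int.fract_eq_self.mpr ⟨by linarith, h⟩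
    rw [gg, abs_sub_round_eq_min, hf, min_eq_right (by linarith)]

lemma gg_fract (x : ℝ) : gg x = min (Int.fract x) (1 - Int.fract x) := by
  rw [gg, abs_sub_round_eq_min]

lemma s2_pos : 0 < s2 := Real.sqrt_pos.mpr (by norm_num)
lemma s2_sq : s2 * s2 = 2 := Real.mul_self_sqrt (by norm_num)
lemma s2_lt : 1 < s2 := by nlinarith [s2_pos, s2_sq]
lemma r2_pos : 0 < r2 := inv_pos.mpr s2_pos
lemma r2_lt_one : r2 < 1 := by
  rw [r2, inv_lt_one_iff₀]; right; exact s2_lt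
lemma r2_mul_s2 : r2 * s2 = 1 := inv_mul_cancel₀ (ne_of_gt s2_pos)
lemma two_mul_r2 : 2 * r2 = s2 := by
  apply mul_left_cancel₀ (ne_of_gt s2_pos)
  calc s2 * (2 * r2) = 2 * (r2 * s2) := by ring
    _ = 2 := by rw [r2_mul_s2]; ring
    _ = s2 * s2 := s2_sq.symm
lemma r2_sq : r2 * r2 = 1/2 := by
  have h : (s2 * s2)⁻¹ = (2:ℝ)⁻¹ := by rw [s2_sq]
  rw [r2, ← mul_inv]
  rw [show Real.sqrt 2 * Real.sqrt 2 = s2 * s2 from rfl, h]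
  norm_num

lemma FF_summable (s : ℝ) : Summable (fun m : ℕ => r2 ^ m * gg ((2:ℝ) ^ m * s)) := by
  apply Summable.of_nonneg_of_le
    (fun m => mul_nonneg (pow_nonneg r2_pos.le m) (gg_nonneg _))
    (fun m => ?_) (summable_geometric_of_lt_one r2_pos.le r2_lt_one)
  calc r2 ^ m * gg ((2:ℝ) ^ m * s) ≤ r2 ^ m * 1 := by
        apply mul_le_mul_of_nonneg_left _ (pow_nonneg r2_pos.le m)
        exact le_trans (gg_le_half _) (by norm_num)
    _ = r2 ^ m := mul_one _

lemma FF_nonneg (s : ℝ) : 0 ≤ FF s :=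
  tsum_nonneg (fun m => mul_nonneg (pow_nonneg r2_pos.le m) (gg_nonneg _))

lemma FF_bound (s : ℝ) : FF s ≤ 4 := by
  have h1 : FF s ≤ ∑' m : ℕ, r2 ^ m :=
    Summable.tsum_le_tsum (fun m => by
        calc r2 ^ m * gg ((2:ℝ) ^ m * s) ≤ r2 ^ m * 1 := by
              apply mul_le_mul_of_nonneg_left _ (pow_nonneg r2_pos.le m)
              exact le_trans (gg_le_half _) (by norm_num)
          _ = r2 ^ m := mul_one _)
      (FF_summable s) (summable_geometric_of_lt_one r2_pos.le r2_lt_one)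
  have h2 : ∑' m : ℕ, r2 ^ m = (1 - r2)⁻¹ := tsum_geometric_of_lt_one r2_pos.le r2_lt_one
  have h3 : (1 - r2)⁻¹ ≤ 4 := by
    rw [inv_le_iff_one_le_mul₀ (by nlinarith [r2_lt_one, r2_sq, r2_pos])]
    nlinarith [r2_sq, r2_pos, r2_lt_one]
  linarith [h1, h2.le, h3]

lemma FF_step (s : ℝ) : FF s = gg s + r2 * FF (2*s) := by
  have key : ∀ m : ℕ, r2 ^ (m+1) * gg ((2:ℝ) ^ (m+1) * s) = r2 * (r2 ^ m * gg ((2:ℝ)^m * (2*s))) := by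
    intro m
    rw [show (2:ℝ) ^ (m+1) * s = (2:ℝ)^m * (2*s) by rw [pow_succ]; ring, pow_succ]
    ring
  calc FF s = r2^0 * gg ((2:ℝ)^0 * s) + ∑' m : ℕ, r2 ^ (m+1) * gg ((2:ℝ)^(m+1) * s) :=
        Summable.tsum_eq_zero_add (FF_summable s)
    _ = gg s + ∑' m : ℕ, r2 * (r2 ^ m * gg ((2:ℝ)^m * (2*s))) := by
        rw [tsum_congr key]; norm_num
    _ = gg s + r2 * FF (2*s) := by rw [tsum_mul_left, FF]

lemma FF_add_int (s : ℝ) (n : ℤ) : FF (s + n) = FF s := by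
  rw [FF, FF]
  apply tsum_congr
  intro m
  congr 1
  have : (2:ℝ) ^ m * (s + n) = 2 ^ m * s + ((2^m * n : ℤ) : ℝ) := by push_cast; ring
  rw [this, gg_add_int]

lemma FF_neg (s : ℝ) : FF (-s) = FF s := by
  rw [FF, FF]
  apply tsum_congr
  intro m
  congr 1
  rw [show (2:ℝ)^m * -s = -((2:ℝ)^m * s) by ring, gg_neg]

lemma FF_subadd (x y : ℝ) : FF (x + y) ≤ FF x + FF y := by
  have h : ∀ m : ℕ, r2 ^ m * gg ((2:ℝ)^m * (x+y)) ≤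
      r2 ^ m * gg ((2:ℝ)^m * x) + r2 ^ m * gg ((2:ℝ)^m * y) := by
    intro m
    rw [← mul_add]
    apply mul_le_mul_of_nonneg_left _ (pow_nonneg r2_pos.le m)
    rw [show (2:ℝ)^m * (x+y) = (2:ℝ)^m*x + (2:ℝ)^m*y by ring]
    exact gg_subadd _ _
  calc FF (x+y) ≤ ∑' m : ℕ, (r2 ^ m * gg ((2:ℝ)^m * x) + r2 ^ m * gg ((2:ℝ)^m * y)) :=
        Summable.tsum_le_tsum h (FF_summable _) ((FF_summable x).add (FF_summable y))
    _ = FF x + FF y := Summable.tsum_add (FF_summable x) (FF_summable y)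

lemma FF_abs_diff (a b : ℝ) : |FF b - FF a| ≤ FF (b - a) := by
  rw [abs_sub_le_iff]
  constructor
  · have := FF_subadd a (b-a)
    rw [show a + (b-a) = b by ring] at this
    linarith
  · have := FF_subadd b (a-b)
    rw [show b + (a-b) = a by ring] at this
    rw [show a - b = -(b-a) by ring, FF_neg] at this
    linarith

lemma FF_decomp (N : ℕ) (h : ℝ) :
    FF h = (∑ m ∈ Finset.range N, r2 ^ m * gg ((2:ℝ)^m * h)) + r2 ^ N * FF ((2:ℝ)^N * h) := by
  induction N with
  | zero => simp
  | succ n ih =>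
    rw [ih, Finset.sum_range_succ, FF_step ((2:ℝ)^n * h)]
    rw [show (2:ℝ) * ((2:ℝ)^n * h) = (2:ℝ)^(n+1) * h by ring]
    ring

lemma s2_lt_two : s2 < 2 := by nlinarith [s2_sq, s2_pos]

lemma FF_twothirds : FF (2/3) = (2 + s2)/3 := by
  have e1 : FF (2/3 : ℝ) = 1/3 + r2 * FF (4/3) := by
    rw [FF_step (2/3)]
    rw [gg_eval_hi (by norm_num) (by norm_num)]
    norm_num
  have e2 : FF (4/3 : ℝ) = FF (1/3) := by
    rw [show (4:ℝ)/3 = 1/3 + ((1:ℤ):ℝ) by norm_num, FF_add_int]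
  have e3 : FF (1/3 : ℝ) = 1/3 + r2 * FF (2/3) := by
    rw [FF_step (1/3)]
    rw [gg_eval_lo (by norm_num) (by norm_num)]
    norm_num
  have h4 : FF (2/3 : ℝ) = 1/3 + r2 * (1/3 + r2 * FF (2/3)) := by
    conv_lhs => rw [e1, e2, e3]
  rw [mul_add, ← mul_assoc, r2_sq] at h4
  have := two_mul_r2
  linarith

lemma FF_le_M (s : ℝ) : FF s ≤ (2 + s2)/3 := by
  have hbdd : BddAbove (Set.range FF) := ⟨4, by rintro _ ⟨s, rfl⟩; exact FF_bound s⟩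
  set T := ⨆ s : ℝ, FF s with hT
  have hle : ∀ s, FF s ≤ T := fun s => le_ciSup hbdd s
  have branch : ∀ s, FF s ≤ max (1/3 + r2*T) ((2+s2)/6 + (1/2)*T) := by
    intro s
    by_cases hg : gg s ≤ 1/3
    · refine le_trans ?_ (le_max_left _ _)
      rw [FF_step s]
      exact add_le_add hg (mul_le_mul_of_nonneg_left (hle _) r2_pos.le)
    · push_neg at hg
      refine le_trans ?_ (le_max_right _ _)
      set d := s - (round s : ℝ) with hd
      have hgs : gg s = |d| := rfl
      have h2s : gg (2*s) = gg (2*d) := by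
        rw [show 2*s = 2*d + ((2*round s : ℤ):ℝ) by push_cast; ring, gg_add_int]
      have habs : gg (2*d) = gg (2*|d|) := by
        rcases abs_cases d with ⟨h,_⟩ | ⟨h,_⟩
        · rw [h]
        · rw [h, show 2 * -d = -(2*d) by ring, gg_neg]
      have hdh : |d| ≤ 1/2 := by rw [← hgs]; exact gg_le_half s
      have hdl : 1/3 < |d| := by rw [← hgs]; exact hg
      have hval : gg (2*|d|) = 1 - 2*|d| := gg_eval_hi (by linarith) (by linarith)
      have claim : gg s + r2 * gg (2*s) ≤ (2+s2)/6 := by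
        rw [hgs, h2s, habs, hval]
        have hr : 1/2 < r2 := by nlinarith [r2_sq, r2_pos, r2_lt_one]
        nlinarith [two_mul_r2, r2_pos, mul_nonneg (by linarith : (0:ℝ) ≤ |d| - 1/3)
          (by linarith : (0:ℝ) ≤ r2 - 1/2)]
      have expand : FF s = gg s + r2 * gg (2*s) + (r2*r2) * FF (2*(2*s)) := by
        rw [FF_step s, FF_step (2*s)]; ring
      rw [expand, r2_sq]
      have := hle (2*(2*s))
      nlinarith [this]
  have hTle : T ≤ max (1/3 + r2*T) ((2+s2)/6 + (1/2)*T) := ciSup_le branch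
  have hTM : T ≤ (2+s2)/3 := by
    rcases le_max_iff.mp hTle with h | h
    · nlinarith [two_mul_r2, r2_mul_s2, r2_pos, r2_lt_one]
    · linarith
  exact le_trans (hle s) hTM

lemma FF_lin01 {u : ℝ} (h0 : 0 ≤ u) (h1 : u ≤ 1) :
    FF u ≤ (s2+5)/6 + ((s2-1)/2)*u := by
  by_cases hc : u ≤ 1/3
  · rw [FF_step u, gg_eval_lo h0 (by linarith)]
    have := FF_le_M (2*u)
    nlinarith [r2_mul_s2, two_mul_r2, r2_pos, s2_lt_two, s2_lt]
  · push_neg at hc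
    have := FF_le_M u
    nlinarith [s2_lt]

lemma FF_key {c : ℝ} (h0 : 1/2 ≤ c) (h1 : c ≤ 1) :
    FF c ≤ (2+2*s2)/3 - r2*c := by
  have e0 : FF (2*c) = FF (2*c - 1) := by
    calc FF (2*c) = FF ((2*c - 1) + ((1:ℤ):ℝ)) := by norm_num
      _ = FF (2*c-1) := FF_add_int _ _
  have e1 : FF c = (1-c) + r2 * FF (2*c-1) := by
    rw [FF_step c, gg_eval_hi h0 h1, e0]
  rw [e1]
  have hlin := FF_lin01 (u := 2*c-1) (by linarith) (by linarith)
  nlinarith [r2_mul_s2, two_mul_r2, r2_pos]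

lemma rpow_nat_half (N : ℕ) : (2:ℝ) ^ ((N:ℝ)/2) = s2 ^ N := by
  have : ((N:ℝ)/2) = (1/2 : ℝ) * (N:ℝ) := by ring
  rw [this, Real.rpow_mul (by norm_num), Real.rpow_natCast]
  congr 1
  rw [s2, Real.sqrt_eq_rpow]

lemma rpow_neg_nat_half (N : ℕ) : (2:ℝ) ^ (-(N:ℝ)/2) = r2 ^ N := by
  have : (-(N:ℝ)/2) = -((N:ℝ)/2) := by ring
  rw [this, Real.rpow_neg (by norm_num), rpow_nat_half, r2, s2, ← inv_pow]

lemma omega_eq {h : ℝ} {N : ℕ} (hν : ν h = (N:ℤ)) :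
    ω h = (1 + r2)*h*s2^N + ((2*s2+2)/3) * r2^N := by
  rw [ω, hν]
  push_cast
  rw [rpow_nat_half, rpow_neg_nat_half]
  rw [show (1:ℝ)/Real.sqrt 2 = r2 by rw [r2, one_div]]
  rw [show Real.sqrt 2 = s2 from rfl]
  ring

lemma geom_s2 (N : ℕ) : ∑ m ∈ Finset.range N, s2^m = (s2+1)*(s2^N-1) := by
  induction N with
  | zero => simp
  | succ n ih =>
    rw [Finset.sum_range_succ, ih, pow_succ]
    linear_combination (-(s2^n)) * s2_sq

lemma FF_decomp_eval (N : ℕ) (h : ℝ) (hp : 0 ≤ h) (hub : (2:ℝ)^N * h ≤ 1) :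
    FF h = (s2+1)*((s2:ℝ)^N - 1)*h + r2^N * FF ((2:ℝ)^N * h) := by
  rw [FF_decomp N h]
  congr 1
  have heval : ∀ m ∈ Finset.range N, r2 ^ m * gg ((2:ℝ)^m * h) = s2^m * h := by
    intro m hm
    rw [Finset.mem_range] at hm
    have hle : (2:ℝ)^(m+1) ≤ (2:ℝ)^N := pow_le_pow_right₀ (by norm_num) hm
    have h2 : (2:ℝ)^(m+1) * h ≤ 1 := by
      calc (2:ℝ)^(m+1) * h ≤ (2:ℝ)^N * h := mul_le_mul_of_nonneg_right hle hp
        _ ≤ 1 := hub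
    have h3 : (2:ℝ)^m * h ≤ 1/2 := by
      rw [pow_succ] at h2; nlinarith [pow_pos (show (0:ℝ) < 2 by norm_num) m]
    rw [gg_eval_lo (mul_nonneg (pow_nonneg (by norm_num) m) hp) h3]
    rw [← mul_assoc, ← mul_pow, show r2 * 2 = s2 by linarith [two_mul_r2]]
  rw [Finset.sum_congr rfl heval, ← Finset.sum_mul, geom_s2]

lemma nu_nonneg {h : ℝ} (hp : 0 < h) (h1 : h ≤ 1) : 0 ≤ ν h := by
  rw [ν]
  apply Int.floor_nonneg.mpr
  simp only [neg_nonneg]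
  exact Real.logb_nonpos (by norm_num) hp.le h1

lemma nu_bounds {h : ℝ} (hp : 0 < h) :
    (2:ℝ)^(-(ν h : ℝ) - 1) < h ∧ h ≤ (2:ℝ)^(-(ν h : ℝ)) := by
  have hlogb : (2:ℝ) ^ (Real.logb 2 h) = h := Real.rpow_logb (by norm_num) (by norm_num) hp
  constructor
  · have h2 : -Real.logb 2 h < (ν h : ℝ) + 1 := by
      rw [ν]; exact Int.lt_floor_add_one _
    have : (-(ν h : ℝ) - 1) < Real.logb 2 h := by linarith
    calc (2:ℝ)^(-(ν h:ℝ)-1) < (2:ℝ)^(Real.logb 2 h) :=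
          Real.rpow_lt_rpow_of_exponent_lt (by norm_num) this
      _ = h := hlogb
  · have h2 : (ν h : ℝ) ≤ -Real.logb 2 h := by rw [ν]; exact_mod_cast Int.floor_le _
    have : Real.logb 2 h ≤ -(ν h : ℝ) := by linarith
    calc h = (2:ℝ)^(Real.logb 2 h) := hlogb.symm
      _ ≤ (2:ℝ)^(-(ν h:ℝ)) := Real.rpow_le_rpow_of_exponent_le (by norm_num) this

lemma FF_le_omega {h : ℝ} (hp : 0 < h) (h1 : h ≤ 1) : FF h ≤ ω h - (1+s2)*h := by
  have hν0 := nu_nonneg hp h1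
  set N := (ν h).toNat with hNdef
  have hN : ν h = (N : ℤ) := (Int.toNat_of_nonneg hν0).symm
  have hcastN : ((ν h : ℤ) : ℝ) = (N:ℝ) := by exact_mod_cast hN
  obtain ⟨hlb, hub⟩ := nu_bounds hp
  rw [hcastN] at hlb hub
  have hpowpos : (0:ℝ) < (2:ℝ)^N := pow_pos (by norm_num) N
  have hrw : (2:ℝ)^(-(N:ℝ)) = ((2:ℝ)^N)⁻¹ := by
    rw [Real.rpow_neg (by norm_num), Real.rpow_natCast]
  have hub' : (2:ℝ)^N * h ≤ 1 := by
    rw [hrw] at hub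
    calc (2:ℝ)^N * h ≤ (2:ℝ)^N * ((2:ℝ)^N)⁻¹ := mul_le_mul_of_nonneg_left hub hpowpos.le
      _ = 1 := mul_inv_cancel₀ (ne_of_gt hpowpos)
  have hlb' : 1/2 < (2:ℝ)^N * h := by
    have : (2:ℝ)^(-(N:ℝ)-1) = ((2:ℝ)^N)⁻¹ * (1/2) := by
      rw [show (-(N:ℝ)-1) = -(N:ℝ) + (-1) by ring, Real.rpow_add (by norm_num), hrw,
        Real.rpow_neg_one]
      norm_num
    rw [this] at hlb
    calc 1/2 = (2:ℝ)^N * (((2:ℝ)^N)⁻¹ * (1/2)) := by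
          field_simp
      _ < (2:ℝ)^N * h := by exact mul_lt_mul_of_pos_left hlb hpowpos
  set c := (2:ℝ)^N * h with hc
  have hdec := FF_decomp_eval N h hp.le hub'
  have hkey := FF_key (c := c) (by linarith) hub'
  have homega := omega_eq hN
  -- powers relation : r2^N * 2^N = s2^N
  have hps : r2^N * (2:ℝ)^N = s2^N := by rw [← mul_pow]; congr 1; linarith [two_mul_r2]
  have hfinal : FF h ≤ (s2+1)*(s2^N-1)*h + r2^N * ((2+2*s2)/3 - r2 * c) := by
    rw [hdec]
    have := mul_le_mul_of_nonneg_left hkey (pow_nonneg r2_pos.le N)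
    linarith
  rw [homega]
  refine le_trans hfinal (le_of_eq ?_)
  rw [hc]
  linear_combination (-(r2*h)) * hps + (-(s2^N*h)) * two_mul_r2

lemma nu_hn (n : ℕ) : ν ((2/3) * (2:ℝ)^(-(n:ℤ))) = (n:ℤ) := by
  have hz : (2:ℝ)^(-(n:ℤ)) ≠ 0 := zpow_ne_zero _ (by norm_num)
  have hlog : Real.logb 2 ((2/3) * (2:ℝ)^(-(n:ℤ))) = Real.logb 2 (2/3) - n := by
    rw [Real.logb_mul (by norm_num) hz, ← Real.rpow_intCast 2 (-(n:ℤ)),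
      Real.logb_rpow (by norm_num) (by norm_num)]
    push_cast
    ring
  rw [ν, hlog]
  have h1 : Real.logb 2 (2/3 : ℝ) ≤ 0 := Real.logb_nonpos (by norm_num) (by norm_num) (by norm_num)
  have h2 : (-1 : ℝ) < Real.logb 2 (2/3 : ℝ) := by
    have hlt : Real.logb 2 ((2:ℝ)⁻¹) < Real.logb 2 (2/3 : ℝ) :=
      Real.logb_lt_logb (by norm_num) (by norm_num) (by norm_num)
    have hminus : Real.logb 2 ((2:ℝ)⁻¹) = -1 := by
      rw [show ((2:ℝ)⁻¹) = (2:ℝ)^(-1:ℝ) by rw [Real.rpow_neg_one],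
        Real.logb_rpow (by norm_num) (by norm_num)]
    linarith
  apply Int.floor_eq_iff.mpr
  constructor
  · push_cast; linarith
  · push_cast; linarith

lemma hn_pow (n : ℕ) : (2:ℝ)^(-(n:ℤ)) = ((2:ℝ)^n)⁻¹ := by
  rw [zpow_neg, zpow_natCast]

lemma FF_hn (n : ℕ) : FF ((2/3) * (2:ℝ)^(-(n:ℤ)))
    = ω ((2/3) * (2:ℝ)^(-(n:ℤ))) - (1 + s2) * ((2/3) * (2:ℝ)^(-(n:ℤ))) := by
  set h := (2/3) * (2:ℝ)^(-(n:ℤ)) with hh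
  have hpow : (0:ℝ) < (2:ℝ)^n := pow_pos (by norm_num) n
  have hp : 0 < h := by rw [hh, hn_pow]; positivity
  have harg : (2:ℝ)^n * h = 2/3 := by
    rw [hh, hn_pow]; field_simp
  have hub : (2:ℝ)^n * h ≤ 1 := by rw [harg]; norm_num
  have hdec := FF_decomp_eval n h hp.le hub
  rw [harg, FF_twothirds] at hdec
  have homega := omega_eq (nu_hn n)
  rw [← hh] at homega
  rw [hdec, homega]
  -- algebra with h = (2/3) * (2^n)⁻¹
  have hps : s2^n * ((2:ℝ)^n)⁻¹ = r2^n := by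
    rw [← inv_pow, ← mul_pow]
    congr 1
    have h2 : (2:ℝ) ≠ 0 := by norm_num
    field_simp
    linarith [two_mul_r2]
  have hps2 : ((2:ℝ)^n)⁻¹ = r2^n * r2^n := by
    rw [← mul_pow, r2_sq, ← inv_pow]
    norm_num
  rw [hh, hn_pow]
  linear_combination (2/3*(s2+1) - 2/3*(1+r2)) * hps + (-(r2^n)/3) * two_mul_r2

lemma e00_nonpos {y : ℝ} (h : y ≤ 0) : e00 y = 0 := by
  rw [e00]; exact max_eq_right (le_trans (min_le_left _ _) h)

lemma e00_ge_one {y : ℝ} (h : 1 ≤ y) : e00 y = 0 := by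
  rw [e00]; exact max_eq_right (le_trans (min_le_right _ _) (by linarith))

lemma e00_mem {y : ℝ} (h0 : 0 ≤ y) (h1 : y ≤ 1) : e00 y = min y (1-y) := by
  rw [e00]
  apply max_eq_left
  rcases le_total y (1-y) with h | h
  · rw [min_eq_left h]; exact h0
  · rw [min_eq_right h]; linarith

lemma gg_int (K : ℕ) : gg ((K:ℝ)) = 0 := by
  rw [gg_fract]; simp [Int.fract_natCast]

lemma sum_tent (K : ℕ) (x : ℝ) (h0 : 0 ≤ x) (h1 : x ≤ (K:ℝ)) :
    ∑ k ∈ Finset.range K, e00 (x - (k:ℝ)) = gg x := by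
  rcases eq_or_lt_of_le h1 with heq | hlt
  · have hz : ∀ k ∈ Finset.range K, e00 (x - (k:ℝ)) = 0 := by
      intro k hk
      rw [Finset.mem_range] at hk
      apply e00_ge_one
      have : (k:ℝ) + 1 ≤ (K:ℝ) := by exact_mod_cast Nat.succ_le_of_lt hk
      linarith
    rw [Finset.sum_congr rfl hz, Finset.sum_const_zero, heq, gg_int]
  · have hj0 : 0 ≤ ⌊x⌋ := Int.floor_nonneg.mpr h0
    set j : ℕ := ⌊x⌋.toNat with hj
    have hjx : (j:ℝ) = ((⌊x⌋:ℤ):ℝ) := by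
      rw [hj]; exact_mod_cast Int.toNat_of_nonneg hj0
    have h2 : ⌊x⌋ < (K:ℤ) := Int.floor_lt.mpr (by exact_mod_cast hlt)
    have hjK : j < K := by omega
    rw [Finset.sum_eq_single_of_mem j (Finset.mem_range.mpr hjK)]
    · have hfr : x - (j:ℝ) = Int.fract x := by
        rw [hjx, Int.fract]
      rw [hfr, e00_mem (Int.fract_nonneg x) (le_of_lt (Int.fract_lt_one x)), gg_fract]
    · intro k hk hne
      rcases lt_or_gt_of_ne hne with hlt2 | hgt
      · -- k < j : x - k ≥ 1
        apply e00_ge_one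
        have hk1 : (k:ℝ) + 1 ≤ (j:ℝ) := by exact_mod_cast Nat.succ_le_of_lt hlt2
        have hfl : (j:ℝ) ≤ x := by rw [hjx]; exact Int.floor_le x
        linarith
      · -- k > j : x - k ≤ 0
        apply e00_nonpos
        have hk1 : (j:ℝ) + 1 ≤ (k:ℝ) := by exact_mod_cast Nat.succ_le_of_lt hgt
        have hfl : x < (j:ℝ) + 1 := by
          rw [hjx]
          exact_mod_cast Int.lt_floor_add_one x
        linarith

lemma innerSumE (m : ℕ) (t : ℝ) (h0 : 0 ≤ t) (h1 : t ≤ 1) :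
    ∑ k ∈ Finset.range (2^m), e m (k:ℤ) t = r2^m * gg ((2:ℝ)^m * t) := by
  have hpow : (0:ℝ) < (2:ℝ)^m := pow_pos (by norm_num) m
  calc ∑ k ∈ Finset.range (2^m), e m (k:ℤ) t
      = ∑ k ∈ Finset.range (2^m), r2^m * e00 ((2:ℝ)^m * t - (k:ℝ)) := by
        apply Finset.sum_congr rfl
        intro k _
        rw [e, rpow_neg_nat_half]
        norm_num
    _ = r2^m * ∑ k ∈ Finset.range (2^m), e00 ((2:ℝ)^m * t - (k:ℝ)) := by
        rw [Finset.mul_sum]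
    _ = r2^m * gg ((2:ℝ)^m * t) := by
        rw [sum_tent (2^m) _ (mul_nonneg hpow.le h0)]
        push_cast
        nlinarith

lemma xhat_eq {t : ℝ} (h0 : 0 ≤ t) (h1 : t ≤ 1) : xhat t = FF t := by
  rw [xhat, FF]
  exact tsum_congr (fun m => innerSumE m t h0 h1)

lemma xhat_zero : xhat 0 = 0 := by
  rw [xhat_eq le_rfl (by norm_num), FF]
  have : ∀ m : ℕ, r2^m * gg ((2:ℝ)^m * 0) = 0 := by
    intro m
    rw [mul_zero, show gg 0 = 0 by simp [gg], mul_zero]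
  rw [tsum_congr this, tsum_zero]

lemma omega_pos {h : ℝ} (hp : 0 < h) : 0 < ω h := by
  rw [ω]
  have h1 : (0:ℝ) < (2:ℝ)^((ν h:ℝ)/2) := Real.rpow_pos_of_pos (by norm_num) _
  have h2 : (0:ℝ) < (2:ℝ)^(-(ν h:ℝ)/2) := Real.rpow_pos_of_pos (by norm_num) _
  have hs : (0:ℝ) < Real.sqrt 2 := s2_pos
  have hc : (0:ℝ) < 1 + 1/Real.sqrt 2 := by positivity
  have t1 : (0:ℝ) < (1 + 1/Real.sqrt 2) * h * (2:ℝ)^((ν h:ℝ)/2) :=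
    mul_pos (mul_pos hc hp) h1
  have t2 : (0:ℝ) < (1/3) * (2*Real.sqrt 2 + 2) * (2:ℝ)^(-(ν h:ℝ)/2) := by positivity
  linarith

lemma diff_le {h t : ℝ} (hp : 0 < h) (ht0 : 0 ≤ t) (ht1 : t ≤ 1 - h) :
    |xhat (t+h) - xhat t| ≤ ω h - (1+s2)*h := by
  have h1 : h ≤ 1 := by linarith
  rw [xhat_eq (by linarith) (by linarith), xhat_eq ht0 (by linarith)]
  calc |FF (t+h) - FF t| ≤ FF ((t+h) - t) := FF_abs_diff _ _
    _ = FF h := by ring_nf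
    _ ≤ ω h - (1+s2)*h := FF_le_omega hp h1

lemma supLeOmega {h : ℝ} (hp : 0 < h) (h1 : h < 1) :
    (⨆ t : Set.Icc (0:ℝ) (1-h), |xhat (↑t + h) - xhat ↑t|) ≤ ω h - (1+s2)*h := by
  haveI : Nonempty (Set.Icc (0:ℝ) (1-h)) :=
    ⟨⟨0, Set.mem_Icc.mpr ⟨le_refl 0, by linarith⟩⟩⟩
  apply ciSup_le
  intro t
  exact diff_le hp t.2.1 t.2.2

lemma ratio_le {h : ℝ} (hp : 0 < h) (h1 : h < 1) :
    (⨆ t : Set.Icc (0:ℝ) (1-h), |xhat (↑t + h) - xhat ↑t|) / ω h ≤ 1 := by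
  rw [div_le_one (omega_pos hp)]
  have h2 := supLeOmega hp h1
  nlinarith [s2_pos, hp, mul_pos s2_pos hp]

def hseq (n : ℕ) : ℝ := (2/3) * (2:ℝ)^(-(n:ℤ))

lemma hseq_pos (n : ℕ) : 0 < hseq n := by
  rw [hseq, hn_pow]; positivity

lemma hseq_le (n : ℕ) : hseq n ≤ 2/3 := by
  rw [hseq, hn_pow]
  have h1 : (1:ℝ) ≤ (2:ℝ)^n := one_le_pow₀ (by norm_num)
  have h2 : (0:ℝ) < (2:ℝ)^n := by positivity
  have h3 : ((2:ℝ)^n)⁻¹ ≤ 1 := by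
    rw [inv_le_one_iff₀]; right; exact h1
  linarith

lemma ratio_ge (n : ℕ) :
    1 - (1+s2) * hseq n / ω (hseq n)
      ≤ (⨆ t : Set.Icc (0:ℝ) (1 - hseq n), |xhat (↑t + hseq n) - xhat ↑t|) / ω (hseq n) := by
  set h := hseq n with hh
  have hp : 0 < h := hseq_pos n
  have h1 : h < 1 := lt_of_le_of_lt (hseq_le n) (by norm_num)
  have hω := omega_pos hp
  have hbdd : BddAbove (Set.range (fun t : Set.Icc (0:ℝ) (1-h) => |xhat (↑t + h) - xhat ↑t|)) := by
    refine ⟨ω h - (1+s2)*h, ?_⟩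
    rintro _ ⟨t, rfl⟩
    exact diff_le hp t.2.1 t.2.2
  have hmem : (0:ℝ) ∈ Set.Icc (0:ℝ) (1-h) := Set.mem_Icc.mpr ⟨le_refl 0, by linarith⟩
  have hval : |xhat ((0:ℝ) + h) - xhat 0| = ω h - (1+s2)*h := by
    rw [zero_add, xhat_zero, sub_zero]
    rw [xhat_eq hp.le (by linarith)]
    rw [abs_of_nonneg (FF_nonneg h)]
    rw [hh]
    exact FF_hn n
  have hsup : ω h - (1+s2)*h ≤ ⨆ t : Set.Icc (0:ℝ) (1-h), |xhat (↑t + h) - xhat ↑t| := by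
    rw [← hval]
    exact le_ciSup hbdd ⟨0, hmem⟩
  calc 1 - (1+s2)*h/ω h = (ω h - (1+s2)*h)/ω h := by field_simp
    _ ≤ (⨆ t : Set.Icc (0:ℝ) (1-h), |xhat (↑t + h) - xhat ↑t|) / ω h := by gcongr

lemma omega_hn_lb (n : ℕ) : (1+s2) * hseq n / ω (hseq n) ≤ 3 * r2^n := by
  have hp := hseq_pos n
  have hω := omega_pos hp
  rw [div_le_iff₀ hω]
  have homega := omega_eq (nu_hn n)
  simp only [hseq] at *
  have hh : (2/3) * (2:ℝ)^(-(n:ℤ)) = (2/3) * ((2:ℝ)^n)⁻¹ := by rw [hn_pow]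
  have hps2 : ((2:ℝ)^n)⁻¹ = r2^n * r2^n := by
    rw [← mul_pow, r2_sq, ← inv_pow]; norm_num
  have hP : (0:ℝ) < r2^n := pow_pos r2_pos n
  have hS : (0:ℝ) < s2^n := pow_pos s2_pos n
  have hfirst : 0 ≤ (1 + r2) * ((2/3) * (2:ℝ)^(-(n:ℤ))) * s2^n := by
    apply mul_nonneg (mul_nonneg (by linarith [r2_pos]) hp.le) hS.le
  rw [homega]
  have hexp : (1+s2) * ((2/3) * (2:ℝ)^(-(n:ℤ))) = (2/3) * (1+s2) * (r2^n * r2^n) := by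
    rw [hh, hps2]; ring
  have htail : (2/3) * (1+s2) * (r2^n * r2^n) ≤ 3 * r2^n * (((2*s2+2)/3) * r2^n) := by
    have : (2/3) * (1+s2) ≤ 3 * ((2*s2+2)/3) := by nlinarith [s2_lt]
    nlinarith [mul_pos hP hP]
  calc (1+s2) * ((2/3) * (2:ℝ)^(-(n:ℤ))) = (2/3) * (1+s2) * (r2^n * r2^n) := hexp
    _ ≤ 3 * r2^n * (((2*s2+2)/3) * r2^n) := htail
    _ ≤ 3 * r2^n * ((1 + r2)*((2/3) * (2:ℝ)^(-(n:ℤ)))*s2^n + ((2*s2+2)/3) * r2^n) := by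
        nlinarith [hP, hfirst]

lemma hseq_tendsto : Filter.Tendsto hseq Filter.atTop (nhdsWithin 0 (Set.Ioi 0)) := by
  apply tendsto_nhdsWithin_of_tendsto_nhds_of_eventually_within
  · have h1 : Filter.Tendsto (fun n : ℕ => ((2:ℝ)⁻¹)^n) Filter.atTop (nhds 0) :=
      tendsto_pow_atTop_nhds_zero_of_lt_one (by norm_num) (by norm_num)
    have h2 := h1.const_mul (2/3 : ℝ)
    rw [mul_zero] at h2
    convert h2 using 2 with n
    rw [hseq, hn_pow, inv_pow]
  · exact Filter.Eventually.of_forall (fun n => hseq_pos n)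

lemma r2_tendsto : Filter.Tendsto (fun n : ℕ => 3 * r2^n) Filter.atTop (nhds 0) := by
  have h1 : Filter.Tendsto (fun n : ℕ => r2^n) Filter.atTop (nhds 0) :=
    tendsto_pow_atTop_nhds_zero_of_lt_one r2_pos.le r2_lt_one
  have h2 := h1.const_mul (3:ℝ)
  rwa [mul_zero] at h2

theorem stmt_12 :
    Filter.limsup
      (fun h : ℝ => (⨆ t : Set.Icc (0 : ℝ) (1 - h), |xhat (↑t + h) - xhat ↑t|) / ω h)
      (nhdsWithin 0 (Set.Ioi 0)) = 1 ∧
    ∀ n : ℕ, xhat ((2 / 3) * (2 : ℝ) ^ (-(n : ℤ))) - xhat 0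
      = ω ((2 / 3) * (2 : ℝ) ^ (-(n : ℤ)))
        - (1 + Real.sqrt 2) * ((2 / 3) * (2 : ℝ) ^ (-(n : ℤ))) := by
  set F := nhdsWithin (0:ℝ) (Set.Ioi 0) with hF
  set u := fun h : ℝ => (⨆ t : Set.Icc (0 : ℝ) (1 - h), |xhat (↑t + h) - xhat ↑t|) / ω h with hu
  have part2 : ∀ n : ℕ, xhat ((2 / 3) * (2 : ℝ) ^ (-(n : ℤ))) - xhat 0
      = ω ((2 / 3) * (2 : ℝ) ^ (-(n : ℤ)))
        - (1 + Real.sqrt 2) * ((2 / 3) * (2 : ℝ) ^ (-(n : ℤ))) := by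
    intro n
    have hp := hseq_pos n
    have hle := hseq_le n
    rw [xhat_zero, sub_zero, xhat_eq (le_of_lt (by rw [← hseq]; exact hp))
      (by rw [← hseq] at *; linarith)]
    exact FF_hn n
  refine ⟨?_, part2⟩
  -- eventually u ≤ 1
  have hev : ∀ᶠ h in F, u h ≤ 1 := by
    rw [hF, eventually_nhdsWithin_iff]
    have h1 : ∀ᶠ x in nhds (0:ℝ), x < 1 := eventually_lt_nhds (by norm_num)
    filter_upwards [h1] with h hh hmem
    exact ratio_le hmem hh
  have hbdd : Filter.IsBoundedUnder (· ≤ ·) F u := ⟨1, by rwa [Filter.eventually_map]⟩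
  -- lower bound on u (hseq n)
  have hlow : ∀ n : ℕ, 1 - 3 * r2^n ≤ u (hseq n) := by
    intro n
    have := ratio_ge n
    have := omega_hn_lb n
    rw [hu]
    dsimp only
    linarith [ratio_ge n, omega_hn_lb n]
  -- limsup ≥ 1
  have hge : (1:ℝ) ≤ Filter.limsup u F := by
    by_contra hcon
    push_neg at hcon
    set L := Filter.limsup u F with hL
    have hε : 0 < (1 - L)/2 := by linarith
    have hev2 : ∀ᶠ n in Filter.atTop, 3 * r2^n < (1-L)/2 :=
      r2_tendsto.eventually_lt_const hε
    have hfreq : ∃ᶠ h in F, 1 - (1-L)/2 ≤ u h := by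
      apply hseq_tendsto.frequently
      apply Filter.Eventually.frequently
      filter_upwards [hev2] with n hn
      linarith [hlow n]
    have := Filter.le_limsup_of_frequently_le hfreq hbdd
    rw [← hL] at this
    linarith
  -- limsup ≤ 1
  have hcob : Filter.IsCoboundedUnder (· ≤ ·) F u := by
    apply Filter.IsCoboundedUnder.of_frequently_ge (a := 1 - 3*r2^0)
    apply hseq_tendsto.frequently
    apply Filter.Eventually.frequently
    apply Filter.Eventually.of_forall
    intro n
    have h0 : 3 * r2^n ≤ 3 * r2^0 := by
      have : r2^n ≤ r2^0 := pow_le_pow_of_le_one r2_pos.le r2_lt_one.le (Nat.zero_le n)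
      linarith
    linarith [hlow n]
  have hle' : Filter.limsup u F ≤ 1 := Filter.limsup_le_of_le hcob hev
  linarith

end
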